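/- The matrix \(\mathcal{A}_\Phi(\mathbf{u}_l,\mathbf{u}_r)=\begin{pmatrix}0&1\\-\bar u^2+q_l\bar h&2\bar u\end{pmatrix}\), where \(\bar u=(\sqrt{h_l}u_l+\sqrt{h_r}u_r)/(\sqrt{h_l}+\sqrt{h_r})\), \(\bar h=(h_l+h_r)/2\), \(u_{l}=q_l/h_l\), \(u_r=q_r/h_r\), satisfies the Roe property for the modified Shallow Water system with the piecewise-segment path: \(\mathcal{A}_\Phi(\mathbf{u}_l,\mathbf{u}_r)(\mathbf{u}_r-\mathbf{u}_l)=\big(q_r-q_l,\ \frac{q_r^2}{h_r}-\frac{q_l^2}{h_l}+q_l\frac{h_r^2-h_l^2}{2}\big)^T\). -/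
import Mathlib


open Matrix

/-- The Roe matrix of the modified Shallow Water system satisfies the
Roe property with the piecewise-segment path:
`A_Φ(u_l,u_r) (u_r - u_l) = (q_r - q_l, q_r²/h_r - q_l²/h_l + q_l (h_r² - h_l²)/2)ᵀ`. -/
theorem modifiedSW_Roe_property (hl ql hr qr : ℝ) (hhl : 0 < hl) (hhr : 0 < hr) :
    let ul : ℝ := ql / hl
    let ur : ℝ := qr / hr
    let ubar : ℝ := (Real.sqrt hl * ul + Real.sqrt hr * ur) / (Real.sqrt hl + Real.sqrt hr)
    let hbar : ℝ := (hl + hr) / 2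
    let APhi : Matrix (Fin 2) (Fin 2) ℝ := !![0, 1; -ubar^2 + ql * hbar, 2 * ubar]
    APhi.mulVec ![hr - hl, qr - ql] =
      ![qr - ql, qr^2 / hr - ql^2 / hl + ql * (hr^2 - hl^2) / 2] := by
  obtain ⟨a, ha0, rfl⟩ : ∃ a, 0 < a ∧ hl = a ^ 2 :=
    ⟨Real.sqrt hl, Real.sqrt_pos.mpr hhl, (Real.sq_sqrt hhl.le).symm⟩
  obtain ⟨b, hb0, rfl⟩ : ∃ b, 0 < b ∧ hr = b ^ 2 :=
    ⟨Real.sqrt hr, Real.sqrt_pos.mpr hhr, (Real.sq_sqrt hhr.le).symm⟩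
  intro ul ur ubar hbar APhi
  funext i
  fin_cases i <;>
    simp [APhi, ubar, ul, ur, hbar, Matrix.mulVec, dotProduct,
      Fin.sum_univ_two, Real.sqrt_sq ha0.le, Real.sqrt_sq hb0.le]
  have hab : a + b ≠ 0 := by positivity
  field_simp
  ring
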